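/- For each positive definite continuous function ρ : [0, ∞) → [0, ∞) there exists a function σ of class KL with σ(s, 0) = s for all s ≥ 0, having the following property: if t₀ ≤ t₁, y : [t₀, t₁] → [0, ∞) is absolutely continuous, u : [0, ∞) → [0, ∞) is locally bounded, and I ⊂ [t₀, t₁] is a set of Lebesgue measure zero such that the derivative ẏ(t) exists for all t ∈ [t₀, t₁] \ I and the implication ( y(t) ≥ u(t) ⟹ ẏ(t) ≤ −ρ(y(t)) ) holds for all t ∈ [t₀, t₁] \ I, then y(t) ≤ max{ σ(y(t₀), t − t₀), sup_{t₀ ≤ s ≤ t} σ(u(s), t − s) } for all t ∈ [t₀, t₁]. -/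

import Mathlib

open MeasureTheory Set Filter

/-- A function `γ : [0,∞) → [0,∞)` is of class `K` if it is continuous,
strictly increasing and `γ 0 = 0`. -/
def ClassK (γ : ℝ → ℝ) : Prop :=
  ContinuousOn γ (Set.Ici 0) ∧ StrictMonoOn γ (Set.Ici 0) ∧ γ 0 = 0

/-- A function `σ : [0,∞) × [0,∞) → [0,∞)` is of class `KL` if it is continuous,
for each fixed `t ≥ 0` the map `s ↦ σ s t` is of class `K`, and for each fixed `s ≥ 0`
the map `t ↦ σ s t` is non-increasing with `σ s t → 0` as `t → +∞`. -/
def ClassKL (σ : ℝ → ℝ → ℝ) : Prop :=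
  ContinuousOn (fun p : ℝ × ℝ => σ p.1 p.2) (Set.Ici 0 ×ˢ Set.Ici 0) ∧
  (∀ t ∈ Set.Ici (0:ℝ), ClassK (fun s => σ s t)) ∧
  (∀ s ∈ Set.Ici (0:ℝ), AntitoneOn (σ s) (Set.Ici 0) ∧
    Filter.Tendsto (σ s) Filter.atTop (nhds 0)) ∧
  (∀ s ∈ Set.Ici (0:ℝ), ∀ t ∈ Set.Ici (0:ℝ), 0 ≤ σ s t)

/-- Absolute continuity of `y` on the interval `[a, b]`. -/
def AbsContOn {E : Type*} [NormedAddCommGroup E] (y : ℝ → E) (a b : ℝ) : Prop :=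
  ∀ ε > (0:ℝ), ∃ δ > (0:ℝ), ∀ n : ℕ, ∀ s t : ℕ → ℝ,
    (∀ i < n, a ≤ s i ∧ s i ≤ t i ∧ t i ≤ b) →
    (∀ i, i + 1 < n → t i ≤ s (i + 1)) →
    (∑ i ∈ Finset.range n, (t i - s i)) < δ →
    (∑ i ∈ Finset.range n, ‖y (t i) - y (s i)‖) < ε


lemma pack_sum_lt {O : Set ℝ} {δ : ℝ} (hδ : 0 < δ)
    (hO : MeasureTheory.volume O < ENNReal.ofReal δ)
    (n : ℕ) (s t : ℕ → ℝ) (hst : ∀ i < n, s i ≤ t i)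
    (hsub : ∀ i < n, Set.Ico (s i) (t i) ⊆ O)
    (hord : ∀ i, i + 1 < n → t i ≤ s (i + 1)) :
    (∑ i ∈ Finset.range n, (t i - s i)) < δ := by
  have hij : ∀ i j, i < j → j < n → t i ≤ s j := by
    intro i j hij hjn
    induction j with
    | zero => omega
    | succ k ih =>
      rcases Nat.lt_or_ge i k with hik | hik
      · have h1 := ih hik (by omega)
        have h2 := hst k (by omega)
        have h3 := hord k (by omega)
        linarith
      · have : i = k := by omega
        subst this
        exact hord i hjn
  have hdisj : (↑(Finset.range n) : Set ℕ).PairwiseDisjoint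
      (fun i => Set.Ico (s i) (t i)) := by
    intro i hi j hj hne
    simp only [Finset.coe_range, Set.mem_Iio] at hi hj
    rcases lt_or_gt_of_ne hne with hlt | hgt
    · apply Set.disjoint_left.2
      intro x hxi hxj
      have := hij i j hlt hj
      exact absurd (hxi.2.trans_le (this.trans hxj.1)) (lt_irrefl x)
    · apply Set.disjoint_right.2
      intro x hxj hxi
      have := hij j i hgt hi
      exact absurd (hxj.2.trans_le (this.trans hxi.1)) (lt_irrefl x)
  have key : ENNReal.ofReal (∑ i ∈ Finset.range n, (t i - s i)) ≤ volume O := by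
    rw [ENNReal.ofReal_sum_of_nonneg (fun i hi => by
      have := hst i (Finset.mem_range.1 hi); linarith)]
    have heq : ∀ i ∈ Finset.range n,
        ENNReal.ofReal (t i - s i) = volume (Set.Ico (s i) (t i)) := by
      intro i _; rw [Real.volume_Ico]
    rw [Finset.sum_congr rfl heq,
      ← measure_biUnion_finset hdisj (fun i _ => measurableSet_Ico)]
    exact measure_mono (Set.iUnion₂_subset fun i hi =>
      hsub i (Finset.mem_range.1 hi))
  exact (ENNReal.ofReal_lt_ofReal_iff hδ).1 (key.trans_lt hO)

lemma lemA {v : ℝ → ℝ} {a b : ℝ} (hab : a ≤ b) {I : Set ℝ}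
    (hI : MeasureTheory.volume I = 0)
    (hcont : ContinuousOn v (Set.Icc a b))
    (hAC : ∀ ε > (0:ℝ), ∃ δ > (0:ℝ), ∀ n : ℕ, ∀ s t : ℕ → ℝ,
        (∀ i < n, a ≤ s i ∧ s i ≤ t i ∧ t i ≤ b) →
        (∀ i, i + 1 < n → t i ≤ s (i + 1)) →
        (∑ i ∈ Finset.range n, (t i - s i)) < δ →
        (∑ i ∈ Finset.range n, (v (t i) - v (s i))) < ε)
    (hderiv : ∀ x ∈ Set.Ico a b \ I, DifferentiableAt ℝ v x ∧ deriv v x ≤ 0) :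
    v b ≤ v a := by
  have key : ∀ ε > (0:ℝ), v b ≤ v a + ε * (b - a) + ε := by
    intro ε hε
    obtain ⟨δ, hδ, hpack⟩ := hAC ε hε
    obtain ⟨O, hIO, hOopen, hOvol⟩ := Set.exists_isOpen_lt_of_lt I (ENNReal.ofReal δ)
      (by rw [hI]; exact ENNReal.ofReal_pos.2 hδ)
    set hs : ℝ → Set ℝ := fun x => {r | ∃ n : ℕ, ∃ s t : ℕ → ℝ,
      (∀ i < n, a ≤ s i ∧ s i ≤ t i ∧ t i ≤ x ∧ Set.Icc (s i) (t i) ⊆ O) ∧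
      (∀ i, i + 1 < n → t i ≤ s (i + 1)) ∧
      r = ∑ i ∈ Finset.range n, (v (t i) - v (s i))} with hhs
    set h : ℝ → ℝ := fun x => sSup (hs x) with hh
    have hzero : ∀ x, (0:ℝ) ∈ hs x := by
      intro x
      exact ⟨0, fun _ => 0, fun _ => 0, by intro i hi; omega, by intro i hi; omega, by simp⟩
    have hub : ∀ x, x ≤ b → ∀ r ∈ hs x, r ≤ ε := by
      rintro x hx r ⟨n, s, t, hm, ho, rfl⟩
      refine (hpack n s t ?_ ho ?_).le
      · intro i hi
        exact ⟨(hm i hi).1, (hm i hi).2.1, (hm i hi).2.2.1.trans hx⟩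
      · refine pack_sum_lt hδ hOvol n s t (fun i hi => (hm i hi).2.1)
          (fun i hi => fun z hz => (hm i hi).2.2.2 ⟨hz.1, hz.2.le⟩) ho
    have hbdd : ∀ x, x ≤ b → BddAbove (hs x) := fun x hx => ⟨ε, fun r hr => hub x hx r hr⟩
    have hge0 : ∀ x, x ≤ b → 0 ≤ h x := fun x hx => le_csSup (hbdd x hx) (hzero x)
    have hle : ∀ x, x ≤ b → h x ≤ ε := fun x hx => Real.sSup_le (hub x hx) hε.le
    have hmono : ∀ x x', x ≤ x' → x' ≤ b → h x ≤ h x' := by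
      intro x x' hxx' hx'b
      refine csSup_le_csSup (hbdd x' hx'b) ⟨0, hzero x⟩ ?_
      rintro r ⟨n, s, t, hm, ho, rfl⟩
      exact ⟨n, s, t, fun i hi => ⟨(hm i hi).1, (hm i hi).2.1,
        (hm i hi).2.2.1.trans hxx', (hm i hi).2.2.2⟩, ho, rfl⟩
    have hstep : ∀ x₁ x₂, a ≤ x₁ → x₁ ≤ x₂ → x₂ ≤ b → Set.Icc x₁ x₂ ⊆ O →
        v x₂ - v x₁ ≤ h x₂ - h x₁ := by
      intro x₁ x₂ hax₁ h12 h2b hIccO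
      have happ : ∀ r ∈ hs x₁, r + (v x₂ - v x₁) ∈ hs x₂ := by
        rintro r ⟨n, s, t, hm, ho, rfl⟩
        refine ⟨n + 1, fun i => if i < n then s i else x₁,
          fun i => if i < n then t i else x₂, ?_, ?_, ?_⟩
        · intro i hi
          by_cases hin : i < n
          · simp only [if_pos hin]
            exact ⟨(hm i hin).1, (hm i hin).2.1, (hm i hin).2.2.1.trans h12,
              (hm i hin).2.2.2⟩
          · simp only [if_neg hin]
            exact ⟨hax₁, h12, le_refl _, hIccO⟩
        · intro i hi
          by_cases hin : i + 1 < n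
          · have hin' : i < n := by omega
            simp only [if_pos hin, if_pos hin']
            exact ho i hin
          · have hin' : i < n ∨ ¬ (i < n) := em _
            rcases hin' with h' | h'
            · have : i + 1 = n := by omega
              simp only [if_pos h', if_neg (by omega : ¬ i + 1 < n)]
              exact (hm i h').2.2.1
            · omega
        · rw [Finset.sum_range_succ]
          simp only [if_neg (lt_irrefl n)]
          congr 1
          refine Finset.sum_congr rfl (fun i hi => ?_)
          have hin : i < n := Finset.mem_range.1 hi
          simp [if_pos hin]
      have hub2 : ∀ r ∈ hs x₁, r ≤ h x₂ - (v x₂ - v x₁) := by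
        intro r hr
        have := le_csSup (hbdd x₂ h2b) (happ r hr)
        linarith
      have h0 : 0 ≤ h x₂ - (v x₂ - v x₁) := hub2 0 (hzero x₁)
      have := Real.sSup_le hub2 h0
      have hhx₁ : h x₁ ≤ h x₂ - (v x₂ - v x₁) := this
      linarith
    set B : Set ℝ := {x | x ∈ Set.Icc a b ∧
      ∀ x' ∈ Set.Icc a x, v x' - v a ≤ ε * (x' - a) + h x'} with hB
    have haB : a ∈ B := by
      refine ⟨⟨le_refl a, hab⟩, ?_⟩
      intro z hz
      have hza : z = a := le_antisymm hz.2 hz.1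
      rw [hza]
      have := hge0 a hab
      linarith
    have hBb : ∀ x ∈ B, x ≤ b := fun x hx => hx.1.2
    set c := sSup B with hc
    have hac : a ≤ c := le_csSup ⟨b, hBb⟩ haB
    have hcb : c ≤ b := csSup_le ⟨a, haB⟩ hBb
    have hprop_lt : ∀ z, a ≤ z → z < c → v z - v a ≤ ε * (z - a) + h z := by
      intro z h1 h2
      obtain ⟨x, hxB, hx⟩ := exists_lt_of_lt_csSup ⟨a, haB⟩ h2
      exact hxB.2 z ⟨h1, hx.le⟩
    have hcprop : ∀ z ∈ Set.Icc a c, v z - v a ≤ ε * (z - a) + h z := by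
      rintro z ⟨h1, h2⟩
      rcases lt_or_eq_of_le h2 with h2' | h2'
      · exact hprop_lt z h1 h2'
      · rw [h2']
        rcases eq_or_lt_of_le hac with h1' | h1'
        · rw [← h1']
          have := hge0 a hab
          linarith
        · have hnb : (nhdsWithin c (Set.Ico a c)).NeBot := by
            refine mem_closure_iff_nhdsWithin_neBot.1 ?_
            rw [closure_Ico (ne_of_lt h1')]
            exact ⟨hac, le_refl c⟩
          have htend : Filter.Tendsto (fun z' => v z' - v a)
              (nhdsWithin c (Set.Ico a c)) (nhds (v c - v a)) := by
            have hcw : ContinuousWithinAt v (Set.Icc a b) c := hcont c ⟨hac, hcb⟩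
            exact ((hcw.mono (fun x hx => ⟨hx.1, hx.2.le.trans hcb⟩)).sub
              continuousWithinAt_const)
          refine le_of_tendsto htend ?_
          refine eventually_mem_nhdsWithin.mono ?_
          intro z' hz'
          have := hprop_lt z' hz'.1 hz'.2
          have hm := hmono z' c hz'.2.le hcb
          nlinarith [hz'.2.le, hε.le]
    rcases eq_or_lt_of_le hcb with hcb' | hclt
    · have := hcprop b (by rw [hcb']; exact ⟨hab, le_refl b⟩)
      have := hle b (le_refl b)
      linarith
    · exfalso
      have hext : ∃ x₂, c < x₂ ∧ x₂ ∈ B := by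
        by_cases hcI : c ∈ I
        · obtain ⟨r, hr0, hball⟩ := Metric.isOpen_iff.1 hOopen c (hIO hcI)
          refine ⟨min b (c + r / 2), lt_min hclt (by linarith), ?_⟩
          have hx2b : min b (c + r / 2) ≤ b := min_le_left _ _
          refine ⟨⟨hac.trans (lt_min hclt (by linarith)).le, hx2b⟩, ?_⟩
          intro z ⟨hz1, hz2⟩
          by_cases hzc : z ≤ c
          · exact hcprop z ⟨hz1, hzc⟩
          · push_neg at hzc
            have hzO : Set.Icc c z ⊆ O := by
              intro w hw
              apply hball
              rw [Metric.mem_ball, Real.dist_eq]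
              have h1 := hw.1
              have h2 := hw.2.trans (hz2.trans (min_le_right _ _))
              rw [abs_of_nonneg (by linarith)]
              linarith
            have hst := hstep c z hac hzc.le (hz2.trans hx2b) hzO
            have hc' := hcprop c ⟨hac, le_refl c⟩
            nlinarith
        · obtain ⟨hdiff, hd0⟩ := hderiv c ⟨⟨hac, hclt⟩, hcI⟩
          have hslope : ∀ᶠ z in nhdsWithin c (Set.Ioi c), slope v c z < ε := by
            have h2 := hasDerivAt_iff_tendsto_slope.1 hdiff.hasDerivAt
            have h3 : ∀ᶠ z in nhdsWithin c {c}ᶜ, slope v c z < ε :=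
              h2.eventually_lt_const (lt_of_le_of_lt hd0 hε)
            exact h3.filter_mono (nhdsWithin_mono c (fun z hz => ne_of_gt hz))
          obtain ⟨w, hwc, hIocw⟩ := mem_nhdsGT_iff_exists_Ioc_subset.1 hslope
          refine ⟨min b w, lt_min hclt hwc, ?_⟩
          have hx2b : min b w ≤ b := min_le_left _ _
          refine ⟨⟨hac.trans (lt_min hclt hwc).le, hx2b⟩, ?_⟩
          intro z ⟨hz1, hz2⟩
          by_cases hzc : z ≤ c
          · exact hcprop z ⟨hz1, hzc⟩
          · push_neg at hzc
            have hsl : slope v c z < ε := hIocw ⟨hzc, hz2.trans (min_le_right _ _)⟩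
            rw [slope_def_field] at hsl
            have hvz : v z - v c < ε * (z - c) := by
              rw [div_lt_iff₀ (by linarith)] at hsl
              · linarith
            have hc' := hcprop c ⟨hac, le_refl c⟩
            have hm := hmono c z hzc.le (hz2.trans hx2b)
            nlinarith
      obtain ⟨x₂, hx₂c, hx₂B⟩ := hext
      have := le_csSup ⟨b, hBb⟩ hx₂B
      rw [← hc] at this
      linarith
  refine le_of_forall_pos_le_add ?_
  intro ε' hε'
  have hpos : (0:ℝ) < b - a + 2 := by linarith
  have hε : 0 < ε' / (b - a + 2) := div_pos hε' hpos
  have := key (ε' / (b - a + 2)) hε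
  have hle2 : ε' / (b - a + 2) * (b - a) + ε' / (b - a + 2) ≤ ε' := by
    rw [div_mul_eq_mul_div, ← add_div, div_le_iff₀ hpos]
    nlinarith
  linarith

noncomputable section

def gf (ρ : ℝ → ℝ) : ℝ → ℝ := fun r => min r (ρ r)

def eta (ρ : ℝ → ℝ) : ℝ → ℝ := fun x => ∫ t in (1:ℝ)..x, (gf ρ t)⁻¹

variable {ρ : ℝ → ℝ}

lemma g_pos (hρpos : ∀ s > (0:ℝ), 0 < ρ s) {r : ℝ} (hr : 0 < r) : 0 < gf ρ r :=
  lt_min hr (hρpos r hr)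

lemma g_le_self {r : ℝ} : gf ρ r ≤ r := min_le_left _ _

lemma g_le_rho {r : ℝ} : gf ρ r ≤ ρ r := min_le_right _ _

lemma g_contAt (hρc : ContinuousOn ρ (Set.Ici 0)) {r : ℝ} (hr : 0 < r) :
    ContinuousAt (gf ρ) r := by
  have hρat : ContinuousAt ρ r :=
    hρc.continuousAt (Ici_mem_nhds hr)
  exact continuousAt_id.min hρat

lemma ginv_contAt (hρc : ContinuousOn ρ (Set.Ici 0))
    (hρpos : ∀ s > (0:ℝ), 0 < ρ s) {r : ℝ} (hr : 0 < r) :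
    ContinuousAt (fun t => (gf ρ t)⁻¹) r :=
  (g_contAt hρc hr).inv₀ (ne_of_gt (g_pos hρpos hr))

lemma ginv_contOn (hρc : ContinuousOn ρ (Set.Ici 0))
    (hρpos : ∀ s > (0:ℝ), 0 < ρ s) :
    ContinuousOn (fun t => (gf ρ t)⁻¹) (Set.Ioi 0) :=
  fun x hx => (ginv_contAt hρc hρpos hx).continuousWithinAt

lemma g_intgr (hρc : ContinuousOn ρ (Set.Ici 0))
    (hρpos : ∀ s > (0:ℝ), 0 < ρ s) {c d : ℝ} (hc : 0 < c) (hd : 0 < d) :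
    IntervalIntegrable (fun t => (gf ρ t)⁻¹) volume c d := by
  refine ContinuousOn.intervalIntegrable ((ginv_contOn hρc hρpos).mono ?_)
  intro x hx
  rcases Set.mem_uIcc.1 hx with h | h
  · exact lt_of_lt_of_le hc h.1
  · exact lt_of_lt_of_le hd h.1

lemma eta_hasDeriv (hρc : ContinuousOn ρ (Set.Ici 0))
    (hρpos : ∀ s > (0:ℝ), 0 < ρ s) {x : ℝ} (hx : 0 < x) :
    HasDerivAt (eta ρ) ((gf ρ x)⁻¹) x :=
  intervalIntegral.integral_hasDerivAt_right (g_intgr hρc hρpos one_pos hx)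
    (ContinuousOn.stronglyMeasurableAtFilter isOpen_Ioi (ginv_contOn hρc hρpos) x hx)
    (ginv_contAt hρc hρpos hx)

lemma eta_sub (hρc : ContinuousOn ρ (Set.Ici 0))
    (hρpos : ∀ s > (0:ℝ), 0 < ρ s) {x x' : ℝ} (hx : 0 < x) (hx' : 0 < x') :
    eta ρ x' = eta ρ x + ∫ t in x..x', (gf ρ t)⁻¹ :=
  (intervalIntegral.integral_add_adjacent_intervals
    (g_intgr hρc hρpos one_pos hx) (g_intgr hρc hρpos hx hx')).symm

lemma eta_lt (hρc : ContinuousOn ρ (Set.Ici 0))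
    (hρpos : ∀ s > (0:ℝ), 0 < ρ s) {x x' : ℝ} (hx : 0 < x) (hxx' : x < x') :
    eta ρ x < eta ρ x' := by
  have hx' : 0 < x' := hx.trans hxx'
  rw [eta_sub hρc hρpos hx hx']
  have : 0 < ∫ t in x..x', (gf ρ t)⁻¹ := by
    refine intervalIntegral.intervalIntegral_pos_of_pos_on
      (g_intgr hρc hρpos hx hx') (fun z hz => ?_) hxx'
    exact inv_pos.2 (g_pos hρpos (hx.trans hz.1))
  linarith

lemma eta_inj (hρc : ContinuousOn ρ (Set.Ici 0))
    (hρpos : ∀ s > (0:ℝ), 0 < ρ s) {x x' : ℝ} (hx : 0 < x) (hx' : 0 < x')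
    (h : eta ρ x = eta ρ x') : x = x' := by
  rcases lt_trichotomy x x' with hlt | heq | hgt
  · exact absurd h (ne_of_lt (eta_lt hρc hρpos hx hlt))
  · exact heq
  · exact absurd h.symm (ne_of_lt (eta_lt hρc hρpos hx' hgt))

lemma eta_one : eta ρ 1 = 0 := by
  simp [eta]

lemma eta_ge_log (hρc : ContinuousOn ρ (Set.Ici 0))
    (hρpos : ∀ s > (0:ℝ), 0 < ρ s) {x : ℝ} (hx : 1 ≤ x) :
    Real.log x ≤ eta ρ x := by
  have h1 : ∫ t in (1:ℝ)..x, t⁻¹ = Real.log x := by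
    rw [integral_inv_of_pos one_pos (by linarith)]
    simp
  rw [← h1]
  refine intervalIntegral.integral_mono_on hx
    (intervalIntegral.intervalIntegrable_inv (fun z hz => ?_) ?_)
    (g_intgr hρc hρpos one_pos (by linarith)) (fun z hz => ?_)
  · rcases Set.mem_uIcc.1 hz with h | h
    · exact ne_of_gt (lt_of_lt_of_le one_pos h.1)
    · exact ne_of_gt (by nlinarith [h.1, hx] : (0:ℝ) < z)
  · exact continuousOn_id
  · have hz0 : 0 < z := lt_of_lt_of_le one_pos hz.1
    exact inv_anti₀ (g_pos hρpos hz0) g_le_self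

lemma eta_le_log (hρc : ContinuousOn ρ (Set.Ici 0))
    (hρpos : ∀ s > (0:ℝ), 0 < ρ s) {x : ℝ} (hx : 0 < x) (hx1 : x ≤ 1) :
    eta ρ x ≤ Real.log x := by
  have hsym : eta ρ x = - ∫ t in x..(1:ℝ), (gf ρ t)⁻¹ := by
    rw [eta, intervalIntegral.integral_symm]
  have h1 : ∫ t in x..(1:ℝ), t⁻¹ = - Real.log x := by
    rw [integral_inv_of_pos hx one_pos, one_div, Real.log_inv]
  have hmono : ∫ t in x..(1:ℝ), t⁻¹ ≤ ∫ t in x..(1:ℝ), (gf ρ t)⁻¹ := by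
    refine intervalIntegral.integral_mono_on hx1 ?_
      (g_intgr hρc hρpos hx one_pos) (fun z hz => ?_)
    · refine intervalIntegral.intervalIntegrable_inv (fun z hz => ?_) ?_
      · rcases Set.mem_uIcc.1 hz with h | h
        · exact ne_of_gt (lt_of_lt_of_le hx h.1)
        · exact ne_of_gt (by nlinarith [h.1] : (0:ℝ) < z)
      · exact continuousOn_id
    · have hz0 : 0 < z := lt_of_lt_of_le hx hz.1
      exact inv_anti₀ (g_pos hρpos hz0) g_le_self
  rw [hsym]
  linarith

lemma eta_contOn (hρc : ContinuousOn ρ (Set.Ici 0))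
    (hρpos : ∀ s > (0:ℝ), 0 < ρ s) :
    ContinuousOn (eta ρ) (Set.Ioi 0) := fun x hx =>
  ((eta_hasDeriv hρc hρpos hx).continuousAt).continuousWithinAt

lemma eta_surj (hρc : ContinuousOn ρ (Set.Ici 0))
    (hρpos : ∀ s > (0:ℝ), 0 < ρ s) (r : ℝ) :
    ∃ x : ℝ, 0 < x ∧ eta ρ x = r := by
  set x₁ := min (Real.exp r) 1 with hx₁
  set x₂ := max (Real.exp r) 1 with hx₂
  have hx₁0 : 0 < x₁ := lt_min (Real.exp_pos r) one_pos
  have hx₁₂ : x₁ ≤ x₂ := (min_le_left _ _).trans (le_max_left _ _)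
  have hcont : ContinuousOn (eta ρ) (Set.Icc x₁ x₂) :=
    (eta_contOn hρc hρpos).mono (fun z hz => lt_of_lt_of_le hx₁0 hz.1)
  have hlow : eta ρ x₁ ≤ r := by
    rcases le_total (Real.exp r) 1 with h | h
    · have : x₁ = Real.exp r := min_eq_left h
      rw [this]
      calc eta ρ (Real.exp r) ≤ Real.log (Real.exp r) :=
            eta_le_log hρc hρpos (Real.exp_pos r) h
        _ = r := Real.log_exp r
    · have : x₁ = 1 := min_eq_right h
      rw [this, eta_one, ← Real.log_exp r]
      exact Real.log_nonneg h
  have hhigh : r ≤ eta ρ x₂ := by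
    rcases le_total (Real.exp r) 1 with h | h
    · have : x₂ = 1 := max_eq_right h
      rw [this, eta_one, ← Real.log_exp r]
      exact Real.log_nonpos (Real.exp_pos r).le h
    · have : x₂ = Real.exp r := max_eq_left h
      rw [this]
      calc r = Real.log (Real.exp r) := (Real.log_exp r).symm
        _ ≤ eta ρ (Real.exp r) := eta_ge_log hρc hρpos h
  obtain ⟨x, hxmem, hxeq⟩ := intermediate_value_Icc hx₁₂ hcont ⟨hlow, hhigh⟩
  exact ⟨x, lt_of_lt_of_le hx₁0 hxmem.1, hxeq⟩

end

section Psi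

variable {ρ : ℝ → ℝ} {ψ : ℝ → ℝ}
variable (hρc : ContinuousOn ρ (Set.Ici 0)) (hρpos : ∀ s > (0:ℝ), 0 < ρ s)
variable (hψpos : ∀ r, 0 < ψ r) (hψeta : ∀ r, eta ρ (ψ r) = r)

include hρc hρpos hψpos hψeta

lemma psi_eta (x : ℝ) (hx : 0 < x) : ψ (eta ρ x) = x :=
  eta_inj hρc hρpos (hψpos _) hx (hψeta _)

lemma psi_strictMono : StrictMono ψ := by
  intro r r' hrr'
  rcases lt_trichotomy (ψ r) (ψ r') with h | h | h
  · exact h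
  · exact absurd (by rw [← hψeta r, ← hψeta r', h]) (ne_of_lt hrr')
  · have := eta_lt hρc hρpos (hψpos r') h
    rw [hψeta r, hψeta r'] at this
    exact absurd hrr' (not_lt.2 this.le)

lemma psi_contAt (r₀ : ℝ) : ContinuousAt ψ r₀ := by
  rw [ContinuousAt]
  refine tendsto_order.2 ⟨?_, ?_⟩
  · intro l hl
    set l' := max l (ψ r₀ / 2) with hl'
    have hl'pos : 0 < l' := lt_of_lt_of_le (half_pos (hψpos r₀)) (le_max_right _ _)
    have hl'lt : l' < ψ r₀ := max_lt hl (half_lt_self (hψpos r₀))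
    have hetal : eta ρ l' < r₀ := by
      have := eta_lt hρc hρpos hl'pos hl'lt
      rwa [hψeta r₀] at this
    refine eventually_nhds_iff.2 ⟨Set.Ioi (eta ρ l'), fun r hr => ?_, isOpen_Ioi, hetal⟩
    have : l' < ψ r := by
      by_contra hcon
      push_neg at hcon
      rcases eq_or_lt_of_le hcon with he | hlt
      · have : eta ρ l' = r := by rw [← he, hψeta r]
        rw [Set.mem_Ioi, this] at hr
        exact lt_irrefl r hr
      · have := eta_lt hρc hρpos (hψpos r) hlt
        rw [hψeta r] at this
        exact absurd hr (not_lt.2 this.le)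
    exact lt_of_le_of_lt (le_max_left _ _) this
  · intro u hu
    have hupos : 0 < u := (hψpos r₀).trans hu
    have hetau : r₀ < eta ρ u := by
      have := eta_lt hρc hρpos (hψpos r₀) hu
      rwa [hψeta r₀] at this
    refine eventually_nhds_iff.2 ⟨Set.Iio (eta ρ u), fun r hr => ?_, isOpen_Iio, hetau⟩
    by_contra hcon
    push_neg at hcon
    have : eta ρ u ≤ eta ρ (ψ r) := by
      rcases eq_or_lt_of_le hcon with he | hlt
      · rw [← he]
      · exact (eta_lt hρc hρpos hupos hlt).le
    rw [hψeta r] at this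
    exact absurd hr (not_lt.2 this)

end Psi

lemma absCont_contOn {y : ℝ → ℝ} {a b : ℝ} (h : AbsContOn y a b) :
    ContinuousOn y (Set.Icc a b) := by
  intro x hx
  rw [ContinuousWithinAt, Metric.tendsto_nhdsWithin_nhds]
  intro ε hε
  obtain ⟨δ, hδ, hp⟩ := h ε hε
  refine ⟨δ, hδ, ?_⟩
  intro z hz hdist
  rw [Real.dist_eq] at hdist ⊢
  rcases le_total z x with hzx | hzx
  · have := hp 1 (fun _ => z) (fun _ => x)
      (by intro i _; exact ⟨hz.1, hzx, hx.2⟩) (by intro i hi; omega)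
      (by
        have := (abs_lt.1 hdist).1
        simpa using (by linarith : x - z < δ))
    simp only [Finset.sum_range_one] at this
    calc |y z - y x| = ‖y z - y x‖ := rfl
      _ = ‖y x - y z‖ := by rw [norm_sub_rev]
      _ < ε := this
  · have := hp 1 (fun _ => x) (fun _ => z)
      (by intro i _; exact ⟨hx.1, hzx, hz.2⟩) (by intro i hi; omega)
      (by
        have := (abs_lt.1 hdist).2
        simpa using (by linarith : z - x < δ))
    simp only [Finset.sum_range_one] at this
    exact this

lemma comp_key {ρ : ℝ → ℝ} {ψ : ℝ → ℝ}
    (hρc : ContinuousOn ρ (Set.Ici 0)) (hρpos : ∀ s > (0:ℝ), 0 < ρ s)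
    {y : ℝ → ℝ} {t₀ t₁ c d : ℝ} {I : Set ℝ}
    (hsub : Set.Icc c d ⊆ Set.Icc t₀ t₁)
    (hcd : c ≤ d)
    (hI : MeasureTheory.volume I = 0)
    (hAC : AbsContOn y t₀ t₁)
    (hypos : ∀ x ∈ Set.Icc c d, 0 < y x)
    (hder : ∀ x ∈ Set.Ico c d \ I, DifferentiableAt ℝ y x ∧ deriv y x ≤ -ρ (y x)) :
    eta ρ (y d) + d ≤ eta ρ (y c) + c := by
  have hct : c ∈ Set.Icc t₀ t₁ := hsub ⟨le_refl c, hcd⟩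
  have hdt : d ∈ Set.Icc t₀ t₁ := hsub ⟨hcd, le_refl d⟩
  have hycont : ContinuousOn y (Set.Icc t₀ t₁) := absCont_contOn hAC
  have hycd : ContinuousOn y (Set.Icc c d) := hycont.mono hsub
  have hcompact : IsCompact (Set.Icc c d) := isCompact_Icc
  have hne : (Set.Icc c d).Nonempty := ⟨c, le_refl c, hcd⟩
  obtain ⟨xm, hxm, hxmin⟩ := hcompact.exists_isMinOn hne hycd
  obtain ⟨xM, hxM, hxmax⟩ := hcompact.exists_isMaxOn hne hycd
  set m := y xm with hm
  set M := y xM with hM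
  have hmpos : 0 < m := hypos xm hxm
  have hmM : m ≤ M := hxmin hxM
  have hyin : ∀ x ∈ Set.Icc c d, y x ∈ Set.Icc m M :=
    fun x hx => ⟨hxmin hx, hxmax hx⟩
  -- minimum of gf on [m, M]
  have hgcont : ContinuousOn (gf ρ) (Set.Icc m M) := by
    intro z hz
    exact (g_contAt hρc (lt_of_lt_of_le hmpos hz.1)).continuousWithinAt
  obtain ⟨zg, hzg, hzgmin⟩ := isCompact_Icc.exists_isMinOn ⟨m, le_refl m, hmM⟩ hgcont
  set gm := gf ρ zg with hgm
  have hgmpos : 0 < gm := g_pos hρpos (lt_of_lt_of_le hmpos hzg.1)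
  have hglb : ∀ z ∈ Set.Icc m M, gm ≤ gf ρ z := fun z hz => hzgmin hz
  -- Lipschitz-type bound for eta on [m, M]
  have hlip : ∀ p q : ℝ, p ∈ Set.Icc m M → q ∈ Set.Icc m M →
      |eta ρ p - eta ρ q| ≤ gm⁻¹ * |p - q| := by
    intro p q hp hq
    have hppos : 0 < p := lt_of_lt_of_le hmpos hp.1
    have hqpos : 0 < q := lt_of_lt_of_le hmpos hq.1
    have : eta ρ p - eta ρ q = ∫ t in q..p, (gf ρ t)⁻¹ := by
      rw [eta_sub hρc hρpos hqpos hppos]; ring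
    rw [this]
    have := intervalIntegral.norm_integral_le_of_norm_le_const
      (C := gm⁻¹) (f := fun t => (gf ρ t)⁻¹) (a := q) (b := p) ?_
    · calc ‖∫ t in q..p, (gf ρ t)⁻¹‖ ≤ gm⁻¹ * |p - q| := this
        _ = gm⁻¹ * |p - q| := rfl
    · intro z hz
      have hzmem : z ∈ Set.Icc m M := by
        have := Set.uIoc_subset_uIcc hz
        rcases Set.mem_uIcc.1 this with h | h
        · exact ⟨hq.1.trans h.1, h.2.trans hp.2⟩
        · exact ⟨hp.1.trans h.1, h.2.trans hq.2⟩
      have hzpos : 0 < z := lt_of_lt_of_le hmpos hzmem.1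
      rw [Real.norm_eq_abs, abs_of_pos (inv_pos.2 (g_pos hρpos hzpos))]
      exact inv_anti₀ hgmpos (hglb z hzmem)
  set v : ℝ → ℝ := fun x => eta ρ (y x) + x with hv
  have hkey : v d ≤ v c := by
    refine lemA hcd hI ?_ ?_ ?_
    · -- continuity of v
      intro x hx
      have h1 : ContinuousWithinAt (fun z => eta ρ (y z)) (Set.Icc c d) x := by
        have hyx : 0 < y x := hypos x hx
        exact ((eta_hasDeriv hρc hρpos hyx).continuousAt).comp_continuousWithinAt
          (hycd x hx)
      exact h1.add continuousWithinAt_id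
    · -- AC-type property of v
      intro ε hε
      obtain ⟨δy, hδy, hpy⟩ := hAC (ε / 2 * gm) (by positivity)
      refine ⟨min δy (ε / 2), lt_min hδy (by positivity), ?_⟩
      intro n s t hmem hord hlen
      have hpack : ∀ i < n, t₀ ≤ s i ∧ s i ≤ t i ∧ t i ≤ t₁ := by
        intro i hi
        exact ⟨hct.1.trans (hmem i hi).1, (hmem i hi).2.1, (hmem i hi).2.2.trans hdt.2⟩
      have hsumy : (∑ i ∈ Finset.range n, ‖y (t i) - y (s i)‖) < ε / 2 * gm :=
        hpy n s t hpack hord (hlen.trans_le (min_le_left _ _))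
      have hterm : ∀ i ∈ Finset.range n,
          v (t i) - v (s i) ≤ gm⁻¹ * ‖y (t i) - y (s i)‖ + (t i - s i) := by
        intro i hi
        have hin := Finset.mem_range.1 hi
        have hsi : s i ∈ Set.Icc c d :=
          ⟨(hmem i hin).1, (hmem i hin).2.1.trans (hmem i hin).2.2⟩
        have hti : t i ∈ Set.Icc c d :=
          ⟨(hmem i hin).1.trans (hmem i hin).2.1, (hmem i hin).2.2⟩
        have := hlip (y (t i)) (y (s i)) (hyin _ hti) (hyin _ hsi)
        have habs : eta ρ (y (t i)) - eta ρ (y (s i)) ≤ gm⁻¹ * |y (t i) - y (s i)| :=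
          (le_abs_self _).trans this
        simp only [hv]
        rw [Real.norm_eq_abs]
        linarith
      calc (∑ i ∈ Finset.range n, (v (t i) - v (s i)))
          ≤ ∑ i ∈ Finset.range n, (gm⁻¹ * ‖y (t i) - y (s i)‖ + (t i - s i)) :=
            Finset.sum_le_sum hterm
        _ = gm⁻¹ * (∑ i ∈ Finset.range n, ‖y (t i) - y (s i)‖)
            + (∑ i ∈ Finset.range n, (t i - s i)) := by
            rw [Finset.sum_add_distrib, Finset.mul_sum]
        _ < gm⁻¹ * (ε / 2 * gm) + ε / 2 := by
            have h1 : gm⁻¹ * (∑ i ∈ Finset.range n, ‖y (t i) - y (s i)‖)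
                ≤ gm⁻¹ * (ε / 2 * gm) := by
              apply mul_le_mul_of_nonneg_left hsumy.le (inv_nonneg.2 hgmpos.le)
            have h2 : (∑ i ∈ Finset.range n, (t i - s i)) < ε / 2 :=
              hlen.trans_le (min_le_right _ _)
            linarith
        _ = ε / 2 + ε / 2 := by
            field_simp
        _ = ε := by ring
    · -- derivative condition
      intro x hx
      obtain ⟨hydiff, hyder⟩ := hder x hx
      have hyx : 0 < y x := hypos x ⟨hx.1.1, hx.1.2.le⟩
      have hetaD := eta_hasDeriv hρc hρpos hyx
      have hcompD : HasDerivAt (fun z => eta ρ (y z))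
          ((gf ρ (y x))⁻¹ * deriv y x) x :=
        HasDerivAt.comp x hetaD hydiff.hasDerivAt
      have hvD : HasDerivAt v ((gf ρ (y x))⁻¹ * deriv y x + 1) x :=
        hcompD.add (hasDerivAt_id x)
      refine ⟨hvD.differentiableAt, ?_⟩
      rw [hvD.deriv]
      have hg := g_pos hρpos hyx
      have h1 : (gf ρ (y x))⁻¹ * gf ρ (y x) = 1 := inv_mul_cancel₀ hg.ne'
      have h2 : deriv y x ≤ -gf ρ (y x) := by
        have := g_le_rho (ρ := ρ) (r := y x)
        linarith
      nlinarith [mul_le_mul_of_nonneg_left h2 (inv_nonneg.2 hg.le)]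
  simp only [hv] at hkey
  linarith

/-- **Lemma 2.4 (comparison lemma).** For each positive definite continuous
`ρ : [0,∞) → [0,∞)` there exists `σ` of class `KL` with `σ(s,0) = s` for all `s ≥ 0`
such that: if `y : [t₀, t₁] → ℝ⁺` is absolutely continuous, `u : ℝ⁺ → ℝ⁺` is locally
bounded, and `I ⊂ [t₀, t₁]` has Lebesgue measure zero, the derivative `ẏ t` exists for
`t ∈ [t₀, t₁] \ I`, and `y t ≥ u t → ẏ t ≤ -ρ (y t)` holds there, then
`y t ≤ max { σ(y t₀, t − t₀), sup_{t₀ ≤ s ≤ t} σ(u s, t − s) }` on `[t₀, t₁]`. -/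
theorem stmt_1 (ρ : ℝ → ℝ)
    (hρc : ContinuousOn ρ (Set.Ici 0))
    (hρ0 : ρ 0 = 0) (hρpos : ∀ s > (0:ℝ), 0 < ρ s) :
    ∃ σ : ℝ → ℝ → ℝ, ClassKL σ ∧ (∀ s ≥ (0:ℝ), σ s 0 = s) ∧
      ∀ t₀ t₁ : ℝ, 0 ≤ t₀ → t₀ ≤ t₁ → ∀ y u : ℝ → ℝ, ∀ I : Set ℝ,
        AbsContOn y t₀ t₁ →
        (∀ t ∈ Set.Icc t₀ t₁, 0 ≤ y t) →
        (∀ t ≥ (0:ℝ), 0 ≤ u t) →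
        (∀ b : ℝ, ∃ C, ∀ t ∈ Set.Icc (0:ℝ) b, u t ≤ C) →
        I ⊆ Set.Icc t₀ t₁ →
        MeasureTheory.volume I = 0 →
        (∀ t ∈ Set.Icc t₀ t₁ \ I, DifferentiableAt ℝ y t ∧
          (u t ≤ y t → deriv y t ≤ -ρ (y t))) →
        ∀ t ∈ Set.Icc t₀ t₁,
          y t ≤ max (σ (y t₀) (t - t₀))
            (sSup ((fun s => σ (u s) (t - s)) '' Set.Icc t₀ t)) := by
  classical
  obtain ⟨ψ, hψ⟩ : ∃ ψ : ℝ → ℝ, ∀ r, 0 < ψ r ∧ eta ρ (ψ r) = r := by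
    choose ψ h1 h2 using eta_surj hρc hρpos
    exact ⟨ψ, fun r => ⟨h1 r, h2 r⟩⟩
  have hψpos : ∀ r, 0 < ψ r := fun r => (hψ r).1
  have hψeta : ∀ r, eta ρ (ψ r) = r := fun r => (hψ r).2
  set σ : ℝ → ℝ → ℝ := fun s t => if s ≤ 0 then 0 else ψ (eta ρ s - t) with hσdef
  have hσ0 : ∀ t, σ 0 t = 0 := fun t => if_pos (le_refl 0)
  have hσeq : ∀ s t, 0 < s → σ s t = ψ (eta ρ s - t) := fun s t hs => if_neg (not_le.2 hs)
  have hσpos : ∀ s t, 0 < s → 0 < σ s t := by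
    intro s t hs; rw [hσeq s t hs]; exact hψpos _
  have hσnonneg : ∀ s t, 0 ≤ σ s t := by
    intro s t
    by_cases hs : s ≤ 0
    · rw [hσdef]; simp [hs]
    · push_neg at hs; exact (hσpos s t hs).le
  have hσs0 : ∀ s, 0 ≤ s → σ s 0 = s := by
    intro s hs
    rcases eq_or_lt_of_le hs with h | h
    · rw [← h, hσ0]
    · rw [hσeq s 0 h, sub_zero, psi_eta hρc hρpos hψpos hψeta s h]
  have hσmono1 : ∀ τ : ℝ, ∀ s s' : ℝ, 0 ≤ s → s < s' → σ s τ < σ s' τ := by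
    intro τ s s' hs hss'
    rcases eq_or_lt_of_le hs with h | h
    · rw [← h, hσ0]; exact hσpos s' τ (by linarith)
    · rw [hσeq s τ h, hσeq s' τ (by linarith)]
      exact psi_strictMono hρc hρpos hψpos hψeta
        (sub_lt_sub_right (eta_lt hρc hρpos h hss') τ)
  have hσmono1' : ∀ τ : ℝ, ∀ s s' : ℝ, 0 ≤ s → s ≤ s' → σ s τ ≤ σ s' τ := by
    intro τ s s' hs hss'
    rcases eq_or_lt_of_le hss' with h | h
    · rw [h]
    · exact (hσmono1 τ s s' hs h).le
  have hσanti : ∀ s : ℝ, 0 < s → ∀ τ τ' : ℝ, τ ≤ τ' → σ s τ' ≤ σ s τ := by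
    intro s hs τ τ' hττ'
    rw [hσeq s τ hs, hσeq s τ' hs]
    exact (psi_strictMono hρc hρpos hψpos hψeta).monotone (by linarith)
  have hσ_le_self : ∀ s t : ℝ, 0 ≤ s → 0 ≤ t → σ s t ≤ s := by
    intro s t hs ht
    rcases eq_or_lt_of_le hs with h | h
    · rw [← h, hσ0]
    · calc σ s t ≤ σ s 0 := hσanti s h 0 t ht
        _ = s := hσs0 s hs
  have hσcontAt : ∀ s t : ℝ, 0 < s →
      ContinuousAt (fun p : ℝ × ℝ => σ p.1 p.2) (s, t) := by
    intro s t hs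
    have hmem : {p : ℝ × ℝ | 0 < p.1} ∈ nhds (s, t) :=
      (isOpen_lt continuous_const continuous_fst).mem_nhds hs
    have hcg : ContinuousAt (fun p : ℝ × ℝ => ψ (eta ρ p.1 - p.2)) (s, t) := by
      refine ContinuousAt.comp (psi_contAt hρc hρpos hψpos hψeta _) ?_
      refine ContinuousAt.sub ?_ continuousAt_snd
      exact ContinuousAt.comp (x := (s, t)) ((eta_hasDeriv hρc hρpos hs).continuousAt) continuousAt_fst
    refine hcg.congr ?_
    refine Filter.eventuallyEq_of_mem hmem ?_
    intro p hp
    exact (hσeq p.1 p.2 hp).symm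
  have hσcontOn : ContinuousOn (fun p : ℝ × ℝ => σ p.1 p.2)
      (Set.Ici 0 ×ˢ Set.Ici 0) := by
    rintro ⟨s, t⟩ ⟨hs, ht⟩
    rcases eq_or_lt_of_le (Set.mem_Ici.1 hs : (0:ℝ) ≤ s) with h | h
    · -- s = 0 boundary
      rw [ContinuousWithinAt]
      have hs0 : s = (0:ℝ) := by simpa using h.symm
      have hval : σ s t = 0 := by rw [hs0, hσ0]
      rw [hval]
      rw [Metric.tendsto_nhdsWithin_nhds]
      intro ε hε
      refine ⟨ε, hε, ?_⟩
      rintro ⟨q1, q2⟩ ⟨hq1, hq2⟩ hdist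
      rw [Real.dist_0_eq_abs]
      rw [abs_of_nonneg (hσnonneg q1 q2)]
      have h1 : σ q1 q2 ≤ q1 := hσ_le_self q1 q2 hq1 hq2
      have h2 : |q1 - s| ≤ dist (q1, q2) (s, t) := by
        rw [Prod.dist_eq]
        exact le_trans (le_of_eq (Real.dist_eq q1 s).symm) (le_max_left _ _)
      have h3 : |q1 - s| < ε := lt_of_le_of_lt h2 hdist
      rw [hs0, sub_zero] at h3
      calc σ q1 q2 ≤ q1 := h1
        _ ≤ |q1| := le_abs_self q1
        _ < ε := h3
    · exact (hσcontAt s t h).continuousWithinAt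
  refine ⟨σ, ⟨hσcontOn, ?_, ?_, fun s _ t _ => hσnonneg s t⟩, fun s hs => hσs0 s hs, ?_⟩
  · -- ClassK in s
    intro t ht
    refine ⟨?_, ?_, hσ0 t⟩
    · have := hσcontOn.comp (f := fun s : ℝ => ((s, t) : ℝ × ℝ))
        ((continuous_id.prodMk continuous_const).continuousOn)
        (fun s hs => Set.mk_mem_prod hs ht)
      exact this
    · intro s hs s' hs' hss'
      exact hσmono1 t s s' hs hss'
  · -- antitone and decay in t
    intro s hs
    rcases eq_or_lt_of_le (Set.mem_Ici.1 hs : (0:ℝ) ≤ s) with h | h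
    · constructor
      · intro τ _ τ' _ _
        rw [← h, hσ0, hσ0]
      · have : σ s = fun _ => (0:ℝ) := funext fun τ => by rw [← h, hσ0]
        rw [this]
        exact tendsto_const_nhds
    · constructor
      · intro τ _ τ' _ hττ'
        exact hσanti s h τ τ' hττ'
      · refine tendsto_order.2 ⟨?_, ?_⟩
        · intro l hl
          exact Filter.Eventually.of_forall (fun τ => lt_of_lt_of_le hl (hσnonneg s τ))
        · intro v hv
          have hv2 : 0 < v / 2 := by linarith
          refine Filter.eventually_atTop.2 ⟨eta ρ s - eta ρ (v / 2) + 1, ?_⟩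
          intro τ hτ
          have h1 : eta ρ s - τ < eta ρ (v / 2) := by linarith
          rw [hσeq s τ h]
          calc ψ (eta ρ s - τ) < ψ (eta ρ (v / 2)) :=
                psi_strictMono hρc hρpos hψpos hψeta h1
            _ = v / 2 := psi_eta hρc hρpos hψpos hψeta _ hv2
            _ < v := by linarith
  · -- main comparison statement
    intro t₀ t₁ ht₀0 ht01 y u I hACy hy0 hu0 hubd hIsub hIvol hder t ht
    obtain ⟨ht0t, htt1⟩ := ht
    have hycont : ContinuousOn y (Set.Icc t₀ t₁) := absCont_contOn hACy
    have ht0 : 0 ≤ t := ht₀0.trans ht0t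
    set S := (fun s => σ (u s) (t - s)) '' Set.Icc t₀ t with hS
    obtain ⟨C, hC⟩ := hubd t
    have hSne : S.Nonempty := ⟨_, ⟨t, ⟨ht0t, le_refl t⟩, rfl⟩⟩
    have hSbdd : BddAbove S := by
      refine ⟨C, ?_⟩
      rintro r ⟨s, hsmem, rfl⟩
      have hus : 0 ≤ u s := hu0 s (ht₀0.trans hsmem.1)
      exact (hσ_le_self (u s) (t - s) hus (by linarith [hsmem.2])).trans
        (hC s ⟨ht₀0.trans hsmem.1, hsmem.2⟩)
    have hmaxnn : (0:ℝ) ≤ σ (y t₀) (t - t₀) := hσnonneg _ _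
    by_cases hyt0 : y t ≤ 0
    · exact hyt0.trans (hmaxnn.trans (le_max_left _ _))
    push_neg at hyt0
    have σbound : ∀ c, t₀ ≤ c → c ≤ t → (∀ x ∈ Set.Icc c t, u x < y x) →
        y t ≤ σ (y c) (t - c) := by
      intro c hc1 hc2 hyu
      have hsub2 : Set.Icc c t ⊆ Set.Icc t₀ t₁ := fun x hx =>
        ⟨hc1.trans hx.1, hx.2.trans htt1⟩
      have hypos : ∀ x ∈ Set.Icc c t, 0 < y x := fun x hx =>
        lt_of_le_of_lt (hu0 x (ht₀0.trans (hc1.trans hx.1))) (hyu x hx)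
      have hder2 : ∀ x ∈ Set.Ico c t \ I,
          DifferentiableAt ℝ y x ∧ deriv y x ≤ -ρ (y x) := by
        rintro x ⟨hx1, hx2⟩
        have hx' : x ∈ Set.Icc t₀ t₁ \ I := ⟨hsub2 ⟨hx1.1, hx1.2.le⟩, hx2⟩
        exact ⟨(hder x hx').1, (hder x hx').2 (hyu x ⟨hx1.1, hx1.2.le⟩).le⟩
      have hck := comp_key (ψ := ψ) hρc hρpos hsub2 hc2 hIvol hACy hypos hder2
      have hycpos : 0 < y c := hypos c ⟨le_refl c, hc2⟩
      have hytpos : 0 < y t := hypos t ⟨hc2, le_refl t⟩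
      rw [hσeq (y c) (t - c) hycpos,
        ← psi_eta hρc hρpos hψpos hψeta (y t) hytpos]
      exact (psi_strictMono hρc hρpos hψpos hψeta).monotone (by linarith)
    set E := {s | s ∈ Set.Icc t₀ t ∧ y s ≤ u s} with hE
    by_cases hEne : E.Nonempty
    · -- E nonempty
      have hEbdd : BddAbove E := ⟨t, fun e he => he.1.2⟩
      set T := sSup E with hT
      obtain ⟨e0, he0⟩ := id hEne
      have hTmem : T ∈ Set.Icc t₀ t :=
        ⟨he0.1.1.trans (le_csSup hEbdd he0), csSup_le hEne (fun e he => he.1.2)⟩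
      have hTmem1 : T ∈ Set.Icc t₀ t₁ := ⟨hTmem.1, hTmem.2.trans htt1⟩
      have hyuT : ∀ x, T < x → x ≤ t → u x < y x := by
        intro x hx1 hx2
        by_contra hcon
        push_neg at hcon
        have : x ∈ E := ⟨⟨hTmem.1.trans hx1.le, hx2⟩, hcon⟩
        exact absurd (le_csSup hEbdd this) (not_le.2 hx1)
      obtain ⟨e, hemono, hetend, heE⟩ := exists_seq_tendsto_sSup hEne hEbdd
      have heIcc : ∀ n, e n ∈ Set.Icc t₀ t := fun n => (heE n).1
      have hytend : Filter.Tendsto (fun n => y (e n)) Filter.atTop (nhds (y T)) := by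
        refine ((hycont T hTmem1).tendsto).comp ?_
        rw [tendsto_nhdsWithin_iff]
        exact ⟨hetend, Filter.Eventually.of_forall
          (fun n => ⟨(heIcc n).1, (heIcc n).2.trans htt1⟩)⟩
      by_cases hyT : y T ≤ 0
      · rcases eq_or_lt_of_le hTmem.2 with hTt | hTt
        · rw [hTt] at hyT
          exact absurd hyT (not_le.2 hyt0)
        · have hbb : ∀ c ∈ Set.Ioc T t, y t ≤ y c := by
            intro c hc
            have h1 : y t ≤ σ (y c) (t - c) := σbound c (hTmem.1.trans hc.1.le) hc.2
              (fun x hx => hyuT x (lt_of_lt_of_le hc.1 hx.1) hx.2)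
            refine h1.trans (hσ_le_self _ _ ?_ (by linarith [hc.2]))
            exact hy0 c ⟨hTmem.1.trans hc.1.le, hc.2.trans htt1⟩
          have hnb : (nhdsWithin T (Set.Ioc T t)).NeBot := by
            rw [nhdsWithin_Ioc_eq_nhdsGT hTt]
            infer_instance
          have htd : Filter.Tendsto y (nhdsWithin T (Set.Ioc T t)) (nhds (y T)) :=
            (hycont T hTmem1).mono (fun x hx =>
              ⟨hTmem.1.trans hx.1.le, hx.2.trans htt1⟩)
          have hyty : y t ≤ y T :=
            ge_of_tendsto htd (eventually_mem_nhdsWithin.mono hbb)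
          have : y t ≤ 0 := hyty.trans hyT
          exact absurd this (not_le.2 hyt0)
      · push_neg at hyT
        have claim1 : y t ≤ σ (y T) (t - T) := by
          rcases eq_or_lt_of_le hTmem.2 with hTt | hTt
          · rw [hTt, sub_self, hσs0 (y t) hyt0.le]
          · have hbb : ∀ c ∈ Set.Ioc T t, y t ≤ σ (y c) (t - c) := by
              intro c hc
              exact σbound c (hTmem.1.trans hc.1.le) hc.2
                (fun x hx => hyuT x (lt_of_lt_of_le hc.1 hx.1) hx.2)
            have hnb : (nhdsWithin T (Set.Ioc T t)).NeBot := by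
              rw [nhdsWithin_Ioc_eq_nhdsGT hTt]
              infer_instance
            have htd : Filter.Tendsto y (nhdsWithin T (Set.Ioc T t)) (nhds (y T)) :=
              (hycont T hTmem1).mono (fun x hx =>
                ⟨hTmem.1.trans hx.1.le, hx.2.trans htt1⟩)
            have hpair : Filter.Tendsto (fun c => ((y c, t - c) : ℝ × ℝ))
                (nhdsWithin T (Set.Ioc T t)) (nhds (y T, t - T)) := by
              refine Filter.Tendsto.prodMk_nhds htd ?_
              exact (tendsto_const_nhds.sub
                (Filter.tendsto_id.mono_left nhdsWithin_le_nhds))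
            have hcont2 : Filter.Tendsto (fun c => σ (y c) (t - c))
                (nhdsWithin T (Set.Ioc T t)) (nhds (σ (y T) (t - T))) :=
              ((hσcontAt (y T) (t - T) hyT).tendsto).comp hpair
            exact ge_of_tendsto hcont2 (eventually_mem_nhdsWithin.mono hbb)
        have claim2 : σ (y T) (t - T) ≤ sSup S := by
          have hpair : Filter.Tendsto (fun n => ((y (e n), t - e n) : ℝ × ℝ))
              Filter.atTop (nhds (y T, t - T)) :=
            Filter.Tendsto.prodMk_nhds hytend (tendsto_const_nhds.sub hetend)
          have htd2 : Filter.Tendsto (fun n => σ (y (e n)) (t - e n))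
              Filter.atTop (nhds (σ (y T) (t - T))) :=
            ((hσcontAt (y T) (t - T) hyT).tendsto).comp hpair
          refine le_of_tendsto htd2 (Filter.Eventually.of_forall (fun n => ?_))
          have hy0n : 0 ≤ y (e n) :=
            hy0 (e n) ⟨(heIcc n).1, (heIcc n).2.trans htt1⟩
          calc σ (y (e n)) (t - e n) ≤ σ (u (e n)) (t - e n) :=
                hσmono1' (t - e n) _ _ hy0n (heE n).2
            _ ≤ sSup S := le_csSup hSbdd ⟨e n, heIcc n, rfl⟩
        exact claim1.trans (claim2.trans (le_max_right _ _))
    · -- E empty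
      have hyu : ∀ s ∈ Set.Icc t₀ t, u s < y s := by
        intro s hs
        by_contra hcon
        push_neg at hcon
        exact hEne ⟨s, hs, hcon⟩
      have := σbound t₀ (le_refl t₀) ht0t hyu
      exact this.trans (le_max_left _ _)
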